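/- (Hurwitz) If a is a positive integer and there exist positive integers x, y, z with x² + y² + z² = a·x·y·z, then a = 1 or a = 3. -/
import Mathlib

private lemma hurwitz_key : ∀ n : ℕ, ∀ a x y z : ℤ, 0 < a → 0 < x → 0 < y → 0 < z →
    x ≤ y → y ≤ z → x + y + z ≤ (n : ℤ) →
    x ^ 2 + y ^ 2 + z ^ 2 = a * x * y * z → a = 1 ∨ a = 3 := by
  intro n
  induction n with
  | zero => intro a x y z ha hx hy hz _ _ hsum _; exfalso; norm_num at hsum; linarith
  | succ n ih =>
    intro a x y z ha hx hy hz hxy hyz hsum heq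
    set z' : ℤ := a * x * y - z with hz'def
    have hmul : z * z' = x ^ 2 + y ^ 2 := by rw [hz'def]; linear_combination -heq
    have hz'pos : 0 < z' := by
      rcases lt_or_ge 0 z' with h | h
      · exact h
      · exfalso; nlinarith
    have heq' : x ^ 2 + y ^ 2 + z' ^ 2 = a * x * y * z' := by
      rw [hz'def]; linear_combination heq
    rcases lt_or_ge z' z with hlt | hge
    · -- descent: new solution with smaller sum
      have hsum' : x + y + z' ≤ (n : ℤ) := by push_cast at hsum ⊢; omega
      rcases le_or_gt y z' with h1 | h1
      · exact ih a x y z' ha hx hy hz'pos hxy h1 hsum' heq'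
      · rcases le_or_gt x z' with h2 | h2
        · exact ih a x z' y ha hx hz'pos hy h2 h1.le
            (by linarith) (by linear_combination heq')
        · exact ih a z' x y ha hz'pos hx hy h2.le hxy
            (by linarith) (by linear_combination heq')
    · -- minimal solution: z' ≥ z
      have hfy : 0 ≤ x ^ 2 + (2 - a * x) * y ^ 2 := by
        have h1 : 0 ≤ (z - y) * (z' - y) :=
          mul_nonneg (by linarith) (by linarith)
        nlinarith [hmul]
      rcases le_or_gt (a * x) 2 with hax | hax
      · exfalso
        have : x ^ 2 + y ^ 2 + z ^ 2 ≤ 2 * (y * z) := by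
          calc x ^ 2 + y ^ 2 + z ^ 2 = (a * x) * (y * z) := by linear_combination heq
          _ ≤ 2 * (y * z) := by
              have : 0 < y * z := mul_pos hy hz
              nlinarith
        nlinarith [sq_nonneg (y - z), sq_nonneg x]
      · -- a * x ≥ 3, so x ≥ y hence x = y, then a*x = 3
        have hx2 : y ^ 2 ≤ x ^ 2 := by nlinarith
        have hxey : x = y := le_antisymm hxy (by nlinarith)
        have hax3 : a * x = 3 := by nlinarith [sq_nonneg x, hx.le]
        have hale : a ≤ 3 := by nlinarith
        interval_cases a
        · left; rfl
        · exfalso; omega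
        · right; rfl

/-- (Hurwitz) If `a` is a positive integer and there exist positive integers
`x, y, z` with `x² + y² + z² = a·x·y·z`, then `a = 1` or `a = 3`. -/
theorem stmt_2 (a : ℤ) (ha : 0 < a)
    (h : ∃ x y z : ℤ, 0 < x ∧ 0 < y ∧ 0 < z ∧
      x ^ 2 + y ^ 2 + z ^ 2 = a * x * y * z) :
    a = 1 ∨ a = 3 := by
  obtain ⟨x, y, z, hx, hy, hz, heq⟩ := h
  -- sort the triple
  obtain ⟨u, v, w, hu, hv, hw, huv, hvw, heq'⟩ :
      ∃ u v w : ℤ, 0 < u ∧ 0 < v ∧ 0 < w ∧ u ≤ v ∧ v ≤ w ∧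
        u ^ 2 + v ^ 2 + w ^ 2 = a * u * v * w := by
    rcases le_total x y with h1 | h1 <;> rcases le_total y z with h2 | h2 <;>
      rcases le_total x z with h3 | h3
    · exact ⟨x, y, z, hx, hy, hz, h1, h2, by linear_combination heq⟩
    · exact ⟨x, y, z, hx, hy, hz, h1, h2, by linear_combination heq⟩
    · exact ⟨x, z, y, hx, hz, hy, h3, h2, by linear_combination heq⟩
    · exact ⟨z, x, y, hz, hx, hy, h3, h1, by linear_combination heq⟩
    · exact ⟨y, x, z, hy, hx, hz, h1, h3, by linear_combination heq⟩
    · exact ⟨y, z, x, hy, hz, hx, h2, h3, by linear_combination heq⟩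
    · exact ⟨z, y, x, hz, hy, hx, h2, h1, by linear_combination heq⟩
    · exact ⟨z, y, x, hz, hy, hx, h2, h1, by linear_combination heq⟩
  exact hurwitz_key (u + v + w).toNat a u v w ha hu hv hw huv hvw
    (Int.self_le_toNat _) heq'
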